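/- If f ∈ ℚ[x] is p^r-Dumas, then every iterate f^{∘n} (n ≥ 1) is irreducible over ℚ; that is, f is dynamically irreducible. -/

import Mathlib

open Polynomial

/-- `f ∈ ℚ[x]` is `p^r`-Dumas: its `p`-adic Newton polygon is a single segment from
`(0, r)` to `(deg f, 0)` (slope `-r/deg f`) and `gcd(r, deg f) = 1`. -/
def IsDumas (p r : ℕ) (f : Polynomial ℚ) : Prop :=
  1 ≤ f.natDegree ∧ Nat.Coprime r f.natDegree ∧
  f.coeff 0 ≠ 0 ∧ padicValRat p (f.coeff 0) = (r : ℤ) ∧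
  padicValRat p f.leadingCoeff = 0 ∧
  ∀ i ≤ f.natDegree, f.coeff i ≠ 0 →
    (r : ℝ) * (1 - (i : ℝ) / (f.natDegree : ℝ)) ≤ (padicValRat p (f.coeff i) : ℝ)

/-- The `n`-th iterate `f ∘ ⋯ ∘ f` of a polynomial (with `polyIter f 0 = X`). -/
noncomputable def polyIter {R : Type*} [CommSemiring R] (f : Polynomial R) : ℕ → Polynomial R
  | 0 => Polynomial.X
  | n + 1 => f.comp (polyIter f n)

set_option linter.unusedSectionVars false

namespace DumasAux

noncomputable def NB (p : ℕ) (q : ℚ) : ℝ := (padicNorm p q : ℝ)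

variable {p : ℕ} [hp : Fact p.Prime]

lemma NB_nonneg (q : ℚ) : 0 ≤ NB p q := by
  rw [NB]; exact_mod_cast padicNorm.nonneg (p := p) q

lemma NB_zero : NB p (0:ℚ) = 0 := by simp [NB]

lemma NB_one : NB p (1:ℚ) = 1 := by simp [NB, padicNorm.one]

lemma NB_mul (q r : ℚ) : NB p (q * r) = NB p q * NB p r := by
  rw [NB, padicNorm.mul]; push_cast; rfl

lemma NB_pow (q : ℚ) (n : ℕ) : NB p (q ^ n) = NB p q ^ n := by
  induction n with
  | zero => simp [NB_one]
  | succ n ih => rw [pow_succ, pow_succ, NB_mul, ih]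

lemma NB_eq_zero {q : ℚ} : NB p q = 0 ↔ q = 0 := by
  constructor
  · intro h
    rw [NB] at h
    exact padicNorm.zero_of_padicNorm_eq_zero (p := p) (by exact_mod_cast h)
  · rintro rfl; exact NB_zero

lemma NB_pos {q : ℚ} (h : q ≠ 0) : 0 < NB p q :=
  lt_of_le_of_ne (NB_nonneg q) (fun h' => h (NB_eq_zero.mp h'.symm))

lemma NB_rpow {q : ℚ} (h : q ≠ 0) :
    NB p q = (p:ℝ) ^ (-(padicValRat p q : ℝ)) := by
  rw [NB, padicNorm.eq_zpow_of_nonzero h,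
    show (-(padicValRat p q : ℝ)) = ((-padicValRat p q : ℤ) : ℝ) by push_cast; ring,
    Real.rpow_intCast]
  push_cast
  rfl

lemma NB_nonarch (q r : ℚ) : NB p (q + r) ≤ max (NB p q) (NB p r) := by
  have := padicNorm.nonarchimedean (p := p) (q := q) (r := r)
  rw [NB, NB, NB]
  exact_mod_cast this

lemma NB_sum_le {ι : Type*} {s : Finset ι} {F : ι → ℚ} {t : ℝ} (ht : 0 ≤ t)
    (h : ∀ i ∈ s, NB p (F i) ≤ t) : NB p (∑ i ∈ s, F i) ≤ t := by
  classical
  revert h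
  refine Finset.cons_induction_on s (fun _ => by simpa [NB] using ht) ?_
  intro a s ha ih h
  rw [Finset.sum_cons]
  refine le_trans (NB_nonarch _ _) (max_le (h a (Finset.mem_cons_self a s)) ?_)
  exact ih fun i hi => h i (Finset.mem_cons_of_mem hi)

lemma NB_sum_lt {ι : Type*} {s : Finset ι} {F : ι → ℚ} {t : ℝ} (ht : 0 < t)
    (h : ∀ i ∈ s, NB p (F i) < t) : NB p (∑ i ∈ s, F i) < t := by
  classical
  revert h
  refine Finset.cons_induction_on s (fun _ => by simpa [NB] using ht) ?_
  intro a s ha ih h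
  rw [Finset.sum_cons]
  refine lt_of_le_of_lt (NB_nonarch _ _) (max_lt (h a (Finset.mem_cons_self a s)) ?_)
  exact ih fun i hi => h i (Finset.mem_cons_of_mem hi)

lemma NB_sum_eq {ι : Type*} {s : Finset ι} {F : ι → ℚ} {i0 : ι} (h0 : i0 ∈ s)
    (hne : F i0 ≠ 0) (h : ∀ i ∈ s, i ≠ i0 → NB p (F i) < NB p (F i0)) :
    NB p (∑ i ∈ s, F i) = NB p (F i0) := by
  classical
  rw [← Finset.add_sum_erase s F h0]
  have hrest : NB p (∑ i ∈ s.erase i0, F i) < NB p (F i0) :=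
    NB_sum_lt (NB_pos hne)
      (fun i hi => h i (Finset.mem_of_mem_erase hi) (Finset.ne_of_mem_erase hi))
  have hq : padicNorm p (F i0) ≠ padicNorm p (∑ i ∈ s.erase i0, F i) := by
    intro hcontra
    rw [NB, NB, hcontra] at hrest
    exact lt_irrefl _ hrest
  have hmax := padicNorm.add_eq_max_of_ne (p := p) hq
  rw [NB, hmax]
  have : padicNorm p (∑ i ∈ s.erase i0, F i) ≤ padicNorm p (F i0) := by
    rw [NB, NB] at hrest; exact_mod_cast le_of_lt hrest
  rw [max_eq_left this]
  rfl


-- continuation inside namespace DumasAux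
variable (p) in
def SegN (r : ℕ) (g : Polynomial ℚ) : Prop :=
  1 ≤ g.natDegree ∧ g.coeff 0 ≠ 0 ∧
  NB p (g.coeff 0) = (p:ℝ) ^ (-(r:ℝ)) ∧
  NB p (g.leadingCoeff) = 1 ∧
  ∀ j : ℕ, NB p (g.coeff j) ≤ (p:ℝ) ^ ((r:ℝ) / (g.natDegree:ℝ) * j - r)

lemma hp1R : (1:ℝ) < p := by exact_mod_cast hp.out.one_lt
lemma hp0R : (0:ℝ) < p := lt_trans one_pos hp1R

lemma NB_mul_bound {g h : Polynomial ℚ} {σ A B : ℝ}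
    (hg : ∀ j : ℕ, NB p (g.coeff j) ≤ (p:ℝ) ^ (σ * j - A))
    (hh : ∀ j : ℕ, NB p (h.coeff j) ≤ (p:ℝ) ^ (σ * j - B)) :
    ∀ k : ℕ, NB p ((g * h).coeff k) ≤ (p:ℝ) ^ (σ * k - (A + B)) := by
  intro k
  rw [Polynomial.coeff_mul]
  refine NB_sum_le (le_of_lt (Real.rpow_pos_of_pos hp0R _)) ?_
  rintro ⟨u, v⟩ huv
  rw [Finset.HasAntidiagonal.mem_antidiagonal] at huv
  have key : (p:ℝ) ^ (σ * u - A) * (p:ℝ) ^ (σ * v - B) = (p:ℝ) ^ (σ * k - (A + B)) := by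
    rw [← Real.rpow_add hp0R]
    congr 1
    subst huv
    push_cast
    ring
  rw [NB_mul, ← key]
  exact mul_le_mul (hg u) (hh v) (NB_nonneg _) (le_of_lt (Real.rpow_pos_of_pos hp0R _))

lemma NB_mul_above {g h : Polynomial ℚ} {σ A B : ℝ} {a b : ℕ}
    (hg : ∀ j : ℕ, NB p (g.coeff j) ≤ (p:ℝ) ^ (σ * j - A))
    (hg' : ∀ j : ℕ, a < j → NB p (g.coeff j) < (p:ℝ) ^ (σ * j - A))
    (hh : ∀ j : ℕ, NB p (h.coeff j) ≤ (p:ℝ) ^ (σ * j - B))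
    (hh' : ∀ j : ℕ, b < j → NB p (h.coeff j) < (p:ℝ) ^ (σ * j - B)) :
    ∀ k : ℕ, a + b < k → NB p ((g * h).coeff k) < (p:ℝ) ^ (σ * k - (A + B)) := by
  intro k hk
  rw [Polynomial.coeff_mul]
  refine NB_sum_lt (Real.rpow_pos_of_pos hp0R _) ?_
  rintro ⟨u, v⟩ huv
  rw [Finset.HasAntidiagonal.mem_antidiagonal] at huv
  have key : (p:ℝ) ^ (σ * u - A) * (p:ℝ) ^ (σ * v - B) = (p:ℝ) ^ (σ * k - (A + B)) := by
    rw [← Real.rpow_add hp0R]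
    congr 1
    subst huv
    push_cast
    ring
  rw [NB_mul, ← key]
  rcases lt_or_ge a u with hau | hua
  · exact lt_of_le_of_lt (mul_le_mul_of_nonneg_left (hh v) (NB_nonneg _))
      (mul_lt_mul_of_pos_right (hg' u hau) (Real.rpow_pos_of_pos hp0R _))
  · have hbv : b < v := by omega
    exact lt_of_le_of_lt (mul_le_mul_of_nonneg_right (hg u) (NB_nonneg _))
      (mul_lt_mul_of_pos_left (hh' v hbv) (Real.rpow_pos_of_pos hp0R _))

lemma NB_mul_below {g h : Polynomial ℚ} {σ A B : ℝ} {a b : ℕ}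
    (hg : ∀ j : ℕ, NB p (g.coeff j) ≤ (p:ℝ) ^ (σ * j - A))
    (hg' : ∀ j : ℕ, j < a → NB p (g.coeff j) < (p:ℝ) ^ (σ * j - A))
    (hh : ∀ j : ℕ, NB p (h.coeff j) ≤ (p:ℝ) ^ (σ * j - B))
    (hh' : ∀ j : ℕ, j < b → NB p (h.coeff j) < (p:ℝ) ^ (σ * j - B)) :
    ∀ k : ℕ, k < a + b → NB p ((g * h).coeff k) < (p:ℝ) ^ (σ * k - (A + B)) := by
  intro k hk
  rw [Polynomial.coeff_mul]
  refine NB_sum_lt (Real.rpow_pos_of_pos hp0R _) ?_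
  rintro ⟨u, v⟩ huv
  rw [Finset.HasAntidiagonal.mem_antidiagonal] at huv
  have key : (p:ℝ) ^ (σ * u - A) * (p:ℝ) ^ (σ * v - B) = (p:ℝ) ^ (σ * k - (A + B)) := by
    rw [← Real.rpow_add hp0R]
    congr 1
    subst huv
    push_cast
    ring
  rw [NB_mul, ← key]
  rcases lt_or_ge u a with hau | hua
  · exact lt_of_le_of_lt (mul_le_mul_of_nonneg_left (hh v) (NB_nonneg _))
      (mul_lt_mul_of_pos_right (hg' u hau) (Real.rpow_pos_of_pos hp0R _))
  · have hbv : v < b := by omega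
    exact lt_of_le_of_lt (mul_le_mul_of_nonneg_right (hg u) (NB_nonneg _))
      (mul_lt_mul_of_pos_left (hh' v hbv) (Real.rpow_pos_of_pos hp0R _))

lemma rpow_inj {x y : ℝ} (h : (p:ℝ) ^ x = (p:ℝ) ^ y) : x = y :=
  le_antisymm ((Real.rpow_le_rpow_left_iff hp1R).1 h.le)
    ((Real.rpow_le_rpow_left_iff hp1R).1 h.ge)

lemma NB_ne_zero_of_eq_rpow {q : ℚ} {x : ℝ} (h : NB p q = (p:ℝ) ^ x) : q ≠ 0 := by
  intro h0
  rw [h0, NB_zero] at h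
  exact absurd h.symm (ne_of_gt (Real.rpow_pos_of_pos hp0R _))

lemma NB_mul_exact {g h : Polynomial ℚ} {σ A B : ℝ} {a b : ℕ}
    (hg : ∀ j : ℕ, NB p (g.coeff j) ≤ (p:ℝ) ^ (σ * j - A))
    (hga : NB p (g.coeff a) = (p:ℝ) ^ (σ * a - A))
    (hg' : ∀ j : ℕ, a < j → NB p (g.coeff j) < (p:ℝ) ^ (σ * j - A))
    (hh : ∀ j : ℕ, NB p (h.coeff j) ≤ (p:ℝ) ^ (σ * j - B))
    (hhb : NB p (h.coeff b) = (p:ℝ) ^ (σ * b - B))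
    (hh' : ∀ j : ℕ, b < j → NB p (h.coeff j) < (p:ℝ) ^ (σ * j - B)) :
    NB p ((g * h).coeff (a + b)) = (p:ℝ) ^ (σ * (a + b) - (A + B)) := by
  have hga0 : g.coeff a ≠ 0 := NB_ne_zero_of_eq_rpow hga
  have hhb0 : h.coeff b ≠ 0 := NB_ne_zero_of_eq_rpow hhb
  have hval : NB p (g.coeff a * h.coeff b) = (p:ℝ) ^ (σ * (a + b) - (A + B)) := by
    rw [NB_mul, hga, hhb, ← Real.rpow_add hp0R]
    congr 1
    push_cast
    ring
  rw [Polynomial.coeff_mul]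
  refine Eq.trans (NB_sum_eq (s := Finset.HasAntidiagonal.antidiagonal (a + b))
    (F := fun x => g.coeff x.1 * h.coeff x.2) (i0 := (a, b))
    (Finset.HasAntidiagonal.mem_antidiagonal.mpr rfl) (mul_ne_zero hga0 hhb0) ?_) hval
  · rintro ⟨u, v⟩ huv hne
    rw [Finset.HasAntidiagonal.mem_antidiagonal] at huv
    have hune : u ≠ a := by
      intro hu
      exact hne (by subst hu; simp at huv ⊢; omega)
    rw [hval, NB_mul]
    have key : (p:ℝ) ^ (σ * u - A) * (p:ℝ) ^ (σ * v - B) = (p:ℝ) ^ (σ * (a + b) - (A + B)) := by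
      rw [← Real.rpow_add hp0R]
      have h2 : (u:ℝ) + (v:ℝ) = (a:ℝ) + (b:ℝ) := by exact_mod_cast huv
      congr 1
      linear_combination σ * h2
    rw [← key]
    rcases lt_or_ge a u with hau | hua
    · exact lt_of_le_of_lt (mul_le_mul_of_nonneg_left (hh v) (NB_nonneg _))
        (mul_lt_mul_of_pos_right (hg' u hau) (Real.rpow_pos_of_pos hp0R _))
    · have hbv : b < v := by omega
      exact lt_of_le_of_lt (mul_le_mul_of_nonneg_right (hg u) (NB_nonneg _))
        (mul_lt_mul_of_pos_left (hh' v hbv) (Real.rpow_pos_of_pos hp0R _))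

lemma exists_argmax (c : Polynomial ℚ) (hc : c ≠ 0) (σ : ℝ) :
    ∃ (a a' : ℕ) (A : ℝ), a' ≤ a ∧ a ≤ c.natDegree ∧
      NB p (c.coeff a) = (p:ℝ) ^ (σ * a - A) ∧
      NB p (c.coeff a') = (p:ℝ) ^ (σ * a' - A) ∧
      (∀ j : ℕ, NB p (c.coeff j) ≤ (p:ℝ) ^ (σ * j - A)) ∧
      (∀ j : ℕ, a < j → NB p (c.coeff j) < (p:ℝ) ^ (σ * j - A)) ∧
      (∀ j : ℕ, j < a' → NB p (c.coeff j) < (p:ℝ) ^ (σ * j - A)) := by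
  classical
  have hs : c.support.Nonempty := Polynomial.nonempty_support_iff.mpr hc
  set φ : ℕ → ℝ := fun j => NB p (c.coeff j) * (p:ℝ) ^ (-(σ * j)) with hφ
  obtain ⟨j0, hj0, hmax⟩ := c.support.exists_max_image φ hs
  set t : Finset ℕ := c.support.filter (fun j => φ j = φ j0) with ht
  have htne : t.Nonempty := ⟨j0, by simp [ht, hj0]⟩
  set a : ℕ := t.max' htne with ha
  set a' : ℕ := t.min' htne with ha'
  have hat : a ∈ t := t.max'_mem htne
  have ha't : a' ∈ t := t.min'_mem htne
  have haS : a ∈ c.support := (Finset.mem_filter.mp hat).1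
  have haφ : φ a = φ j0 := (Finset.mem_filter.mp hat).2
  have ha'S : a' ∈ c.support := (Finset.mem_filter.mp ha't).1
  have ha'φ : φ a' = φ j0 := (Finset.mem_filter.mp ha't).2
  have hca : c.coeff a ≠ 0 := Polynomial.mem_support_iff.mp haS
  have hca' : c.coeff a' ≠ 0 := Polynomial.mem_support_iff.mp ha'S
  set A : ℝ := σ * a + (padicValRat p (c.coeff a) : ℝ) with hA
  -- generic translation: NB value from φ value
  have hφval : ∀ j : ℕ, φ j = φ j0 → NB p (c.coeff j) = (p:ℝ) ^ (σ * j - A) := by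
    intro j hj
    have h1 : NB p (c.coeff a) = (p:ℝ) ^ (σ * a - A) := by
      rw [NB_rpow hca, hA]
      congr 1
      ring
    have h2 : φ j = φ a := by rw [hj, haφ]
    have h3 : NB p (c.coeff j) * (p:ℝ) ^ (-(σ * j)) =
        (p:ℝ) ^ (σ * a - A) * (p:ℝ) ^ (-(σ * a)) := by
      rw [← h1]; exact h2
    have h4 : NB p (c.coeff j) * (p:ℝ) ^ (-(σ * j)) = (p:ℝ) ^ (-A) := by
      rw [h3, ← Real.rpow_add hp0R]; congr 1; ring
    have h5 : (p:ℝ) ^ (σ * j - A) = (p:ℝ) ^ (-A) / (p:ℝ) ^ (-(σ * j)) := by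
      rw [← Real.rpow_sub hp0R]; congr 1; ring
    rw [h5, eq_div_iff (ne_of_gt (Real.rpow_pos_of_pos hp0R _))]
    exact h4
  have hle : ∀ j : ℕ, NB p (c.coeff j) ≤ (p:ℝ) ^ (σ * j - A) := by
    intro j
    by_cases hj : j ∈ c.support
    · have h2 : φ j ≤ φ a := by rw [haφ]; exact hmax j hj
      have h1 : NB p (c.coeff a) * (p:ℝ) ^ (-(σ * a)) = (p:ℝ) ^ (-A) := by
        rw [hφval a haφ, ← Real.rpow_add hp0R]; congr 1; ring
      have h4 : NB p (c.coeff j) * (p:ℝ) ^ (-(σ * j)) ≤ (p:ℝ) ^ (-A) := by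
        rw [← h1]; exact h2
      have h5 : (p:ℝ) ^ (σ * j - A) = (p:ℝ) ^ (-A) / (p:ℝ) ^ (-(σ * j)) := by
        rw [← Real.rpow_sub hp0R]; congr 1; ring
      rw [h5, le_div_iff₀ (Real.rpow_pos_of_pos hp0R _)]
      exact h4
    · rw [Polynomial.notMem_support_iff.mp hj, NB_zero]
      exact le_of_lt (Real.rpow_pos_of_pos hp0R _)
  have hφ0 : φ j0 = (p:ℝ) ^ (-A) := by
    rw [← haφ]
    show NB p (c.coeff a) * (p:ℝ) ^ (-(σ * (a:ℝ))) = _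
    rw [hφval a haφ, ← Real.rpow_add hp0R]
    congr 1
    ring
  have hstrict : ∀ j : ℕ, j ∈ c.support → φ j ≠ φ j0 →
      NB p (c.coeff j) < (p:ℝ) ^ (σ * j - A) := by
    intro j hj hne
    refine lt_of_le_of_ne (hle j) ?_
    intro heq
    apply hne
    show NB p (c.coeff j) * (p:ℝ) ^ (-(σ * (j:ℝ))) = φ j0
    rw [hφ0, heq, ← Real.rpow_add hp0R]
    congr 1
    ring
  have hout : ∀ j : ℕ, j ∉ c.support → NB p (c.coeff j) < (p:ℝ) ^ (σ * j - A) := by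
    intro j hj
    rw [Polynomial.notMem_support_iff.mp hj, NB_zero]
    exact Real.rpow_pos_of_pos hp0R _
  refine ⟨a, a', A, t.min'_le a hat, Polynomial.le_natDegree_of_ne_zero hca,
    hφval a haφ, hφval a' ha'φ, hle, ?_, ?_⟩
  · intro j hja
    by_cases hj : j ∈ c.support
    · refine hstrict j hj (fun hφj => ?_)
      have : j ∈ t := Finset.mem_filter.mpr ⟨hj, hφj⟩
      exact absurd (t.le_max' j this) (by omega)
    · exact hout j hj
  · intro j hja
    by_cases hj : j ∈ c.support
    · refine hstrict j hj (fun hφj => ?_)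
      have : j ∈ t := Finset.mem_filter.mpr ⟨hj, hφj⟩
      exact absurd (t.min'_le j this) (by omega)
    · exact hout j hj

lemma segN_irreducible {r : ℕ} {F : Polynomial ℚ} (hF : SegN p r F)
    (hcop : Nat.Coprime r F.natDegree) : Irreducible F := by
  obtain ⟨hdF, hF0, hFv0, hFlead, hFb⟩ := hF
  have hFne : F ≠ 0 := fun h => hF0 (by simp [h])
  have hdRpos : (0:ℝ) < (F.natDegree : ℝ) := by
    exact_mod_cast lt_of_lt_of_le one_pos hdF
  constructor
  · intro hu
    rw [Polynomial.isUnit_iff_degree_eq_zero] at hu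
    have h0 : F.natDegree = 0 := Polynomial.natDegree_eq_zero_iff_degree_le_zero.mpr hu.le
    omega
  · intro g h hgh
    by_contra hcon
    push_neg at hcon
    obtain ⟨hgu, hhu⟩ := hcon
    have hgne : g ≠ 0 := fun h0 => hFne (by rw [hgh, h0, zero_mul])
    have hhne : h ≠ 0 := fun h0 => hFne (by rw [hgh, h0, mul_zero])
    have hm : 1 ≤ g.natDegree := by
      rcases Nat.eq_zero_or_pos g.natDegree with h0 | h1
      · exact absurd (Polynomial.isUnit_iff_degree_eq_zero.mpr
          (by rw [Polynomial.degree_eq_natDegree hgne, h0]; rfl)) hgu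
      · exact h1
    have he : 1 ≤ h.natDegree := by
      rcases Nat.eq_zero_or_pos h.natDegree with h0 | h1
      · exact absurd (Polynomial.isUnit_iff_degree_eq_zero.mpr
          (by rw [Polynomial.degree_eq_natDegree hhne, h0]; rfl)) hhu
      · exact h1
    have hme : g.natDegree + h.natDegree = F.natDegree := by
      rw [hgh, Polynomial.natDegree_mul hgne hhne]
    obtain ⟨a, a', A, haa', ham, hga, hga', hgle, hgabove, hgbelow⟩ :=
      exists_argmax (p := p) g hgne ((r:ℝ) / (F.natDegree : ℝ))
    obtain ⟨b, b', B, hbb', hbe, hhb, hhb', hhle, hhabove, hhbelow⟩ :=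
      exists_argmax (p := p) h hhne ((r:ℝ) / (F.natDegree : ℝ))
    have hEx : NB p (F.coeff (a + b)) = (p:ℝ) ^ (((r:ℝ) / (F.natDegree : ℝ)) * ((a:ℝ) + (b:ℝ)) - (A + B)) := by
      have := NB_mul_exact hgle hga hgabove hhle hhb hhabove
      rwa [← hgh] at this
    have hABr : (r:ℝ) ≤ A + B := by
      have h2 := hFb (a + b)
      rw [hEx, Real.rpow_le_rpow_left_iff hp1R] at h2
      push_cast at h2
      linarith
    have habd : a + b = F.natDegree := by
      rcases eq_or_lt_of_le (show a + b ≤ F.natDegree by omega) with heq | hlt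
      · exact heq
      · exfalso
        have h1 : NB p (F.coeff F.natDegree) <
            (p:ℝ) ^ (((r:ℝ) / (F.natDegree : ℝ)) * ((F.natDegree : ℕ) : ℝ) - (A + B)) := by
          have := NB_mul_above hgle hgabove hhle hhabove _ hlt
          rwa [← hgh] at this
        have h2 : NB p (F.coeff F.natDegree) = 1 := by
          rw [Polynomial.coeff_natDegree]; exact hFlead
        rw [h2] at h1
        have h3 : ((r:ℝ) / (F.natDegree : ℝ)) * ((F.natDegree : ℕ) : ℝ) = (r:ℝ) := by
          field_simp
        rw [h3] at h1
        have h4 : (p:ℝ) ^ (0:ℝ) < (p:ℝ) ^ ((r:ℝ) - (A + B)) := by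
          rw [Real.rpow_zero]; exact h1
        rw [Real.rpow_lt_rpow_left_iff hp1R] at h4
        linarith
    have ha0 : a' = 0 ∧ b' = 0 := by
      by_contra hne
      have hlt : 0 < a' + b' := by omega
      have h1 : NB p (F.coeff 0) < (p:ℝ) ^ (((r:ℝ) / (F.natDegree : ℝ)) * ((0 : ℕ) : ℝ) - (A + B)) := by
        have := NB_mul_below hgle hgbelow hhle hhbelow 0 hlt
        rwa [← hgh] at this
      rw [hFv0, Real.rpow_lt_rpow_left_iff hp1R] at h1
      have h5 : ((r:ℝ) / (F.natDegree : ℝ)) * ((0 : ℕ) : ℝ) = 0 := by norm_num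
      rw [h5] at h1
      linarith
    have haM : a = g.natDegree := by omega
    -- both 0 and natDegree g attain the max for g
    have hgc0 : g.coeff 0 ≠ 0 := by
      have := hga'
      rw [ha0.1] at this
      exact NB_ne_zero_of_eq_rpow this
    have hgcm : g.coeff g.natDegree ≠ 0 := by
      rw [← haM]; exact NB_ne_zero_of_eq_rpow hga
    set v0 : ℤ := padicValRat p (g.coeff 0) with hv0'
    set va : ℤ := padicValRat p (g.coeff g.natDegree) with hva'
    have hA0 : A = (v0 : ℝ) := by
      have h1 := hga'
      rw [ha0.1] at h1
      rw [NB_rpow hgc0] at h1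
      have h2 := rpow_inj h1
      push_cast at h2
      linarith
    have hAm : -(va : ℝ) = ((r:ℝ) / (F.natDegree : ℝ)) * (g.natDegree : ℝ) - A := by
      have h1 := hga
      rw [haM, NB_rpow hgcm] at h1
      exact rpow_inj h1
    have hkey : (r : ℝ) * (g.natDegree : ℝ) = ((v0 - va : ℤ) : ℝ) * (F.natDegree : ℝ) := by
      push_cast
      have hd0 : (F.natDegree : ℝ) ≠ 0 := ne_of_gt hdRpos
      field_simp at hAm
      nlinarith [hAm, hA0]
    have hkey2 : ((r * g.natDegree : ℕ) : ℤ) = (v0 - va) * (F.natDegree : ℤ) := by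
      exact_mod_cast hkey
    have hdvd : (F.natDegree : ℤ) ∣ ((r * g.natDegree : ℕ) : ℤ) :=
      ⟨v0 - va, by linarith [hkey2]⟩
    have hdvdN : F.natDegree ∣ r * g.natDegree := Int.natCast_dvd_natCast.mp hdvd
    have hdvdM : F.natDegree ∣ g.natDegree := by
      exact hcop.symm.dvd_of_dvd_mul_left hdvdN
    have := Nat.le_of_dvd (by omega) hdvdM
    omega

lemma segN_pow {r : ℕ} {g : Polynomial ℚ} (hg : SegN p r g) (i : ℕ) :
    ∀ j : ℕ, NB p ((g ^ i).coeff j) ≤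
      (p:ℝ) ^ ((r:ℝ) / (g.natDegree : ℝ) * j - (i:ℝ) * r) := by
  induction i with
  | zero =>
    intro j
    rcases Nat.eq_zero_or_pos j with rfl | hj
    · rw [pow_zero, Polynomial.coeff_one_zero, NB_one]
      have : (r:ℝ) / (g.natDegree : ℝ) * ((0:ℕ):ℝ) - ((0:ℕ):ℝ) * r = 0 := by
        push_cast; ring
      rw [this, Real.rpow_zero]
    · rw [pow_zero, Polynomial.coeff_one, if_neg (by omega), NB_zero]
      exact le_of_lt (Real.rpow_pos_of_pos hp0R _)
  | succ i ih =>
    intro j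
    rw [pow_succ]
    have := NB_mul_bound ih hg.2.2.2.2 j
    convert this using 2
    push_cast
    ring

lemma segN_comp {r : ℕ} {f g : Polynomial ℚ} (hr : 1 ≤ r) (hf : SegN p r f)
    (hd2 : 2 ≤ f.natDegree) (hg : SegN p r g) : SegN p r (f.comp g) := by
  obtain ⟨hfd, hf0, hfv0, hflead, hfb⟩ := hf
  obtain ⟨hgd, hg0, hgv0, hglead, hgb⟩ := hg
  have hgne : g ≠ 0 := fun h => hg0 (by simp [h])
  have hdc : (f.comp g).natDegree = f.natDegree * g.natDegree := Polynomial.natDegree_comp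
  have hdR : (0:ℝ) < (f.natDegree : ℝ) := by exact_mod_cast lt_of_lt_of_le two_pos hd2
  have hDR : (0:ℝ) < (g.natDegree : ℝ) := by exact_mod_cast lt_of_lt_of_le one_pos hgd
  have hcoeff : ∀ j : ℕ, (f.comp g).coeff j =
      ∑ i ∈ f.support, f.coeff i * (g ^ i).coeff j := by
    intro j
    rw [Polynomial.comp_eq_sum_left, Polynomial.sum_def, Polynomial.finset_sum_coeff]
    exact Finset.sum_congr rfl fun i _ => by rw [Polynomial.coeff_C_mul]
  -- the general coefficient bound
  have hbound : ∀ j : ℕ, NB p ((f.comp g).coeff j) ≤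
      (p:ℝ) ^ ((r:ℝ) / ((f.natDegree : ℝ) * (g.natDegree : ℝ)) * j - r) := by
    intro j
    rw [hcoeff j]
    refine NB_sum_le (le_of_lt (Real.rpow_pos_of_pos hp0R _)) ?_
    intro i _
    rcases le_or_gt (j : ℕ) (i * g.natDegree) with hji | hji
    · rw [NB_mul]
      have h1 := hfb i
      have h2 := segN_pow ⟨hgd, hg0, hgv0, hglead, hgb⟩ i j
      have h3 : NB p (f.coeff i) * NB p ((g ^ i).coeff j) ≤
          (p:ℝ) ^ ((r:ℝ) / (f.natDegree : ℝ) * i - r) *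
          (p:ℝ) ^ ((r:ℝ) / (g.natDegree : ℝ) * j - (i:ℝ) * r) :=
        mul_le_mul h1 h2 (NB_nonneg _) (le_of_lt (Real.rpow_pos_of_pos hp0R _))
      refine le_trans h3 ?_
      rw [← Real.rpow_add hp0R, Real.rpow_le_rpow_left_iff hp1R]
      have hcast : (j:ℝ) ≤ (i:ℝ) * (g.natDegree : ℝ) := by exact_mod_cast hji
      have h1d : (1:ℝ) ≤ (f.natDegree : ℝ) := by exact_mod_cast le_trans one_le_two hd2
      have hident : (r:ℝ) / ((f.natDegree : ℝ) * (g.natDegree : ℝ)) * j - r -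
          ((r:ℝ) / (f.natDegree : ℝ) * i - r + ((r:ℝ) / (g.natDegree : ℝ) * j - (i:ℝ) * r)) =
          (r:ℝ) * ((f.natDegree : ℝ) - 1) * ((i:ℝ) * (g.natDegree : ℝ) - j) /
            ((f.natDegree : ℝ) * (g.natDegree : ℝ)) := by
        field_simp
        ring
      have hnn : 0 ≤ (r:ℝ) * ((f.natDegree : ℝ) - 1) * ((i:ℝ) * (g.natDegree : ℝ) - j) /
          ((f.natDegree : ℝ) * (g.natDegree : ℝ)) := by
        apply div_nonneg
        · apply mul_nonneg
          · apply mul_nonneg (Nat.cast_nonneg r)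
            linarith
          · linarith
        · positivity
      linarith
    · have hzero : (g ^ i).coeff j = 0 := by
        apply Polynomial.coeff_eq_zero_of_natDegree_lt
        calc (g ^ i).natDegree ≤ i * g.natDegree := Polynomial.natDegree_pow_le
        _ < j := hji
      rw [hzero, mul_zero, NB_zero]
      exact le_of_lt (Real.rpow_pos_of_pos hp0R _)
  -- constant coefficient
  have hc0 : (f.comp g).coeff 0 = ∑ i ∈ f.support, f.coeff i * (g.coeff 0) ^ i := by
    rw [hcoeff 0]
    refine Finset.sum_congr rfl fun i _ => ?_
    congr 1
    rw [Polynomial.coeff_zero_eq_eval_zero, Polynomial.eval_pow,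
      ← Polynomial.coeff_zero_eq_eval_zero]
  have h0mem : 0 ∈ f.support := Polynomial.mem_support_iff.mpr hf0
  have hF00 : f.coeff 0 * (g.coeff 0) ^ 0 ≠ 0 := by
    rw [pow_zero, mul_one]; exact hf0
  have hconstNB : NB p ((f.comp g).coeff 0) = (p:ℝ) ^ (-(r:ℝ)) := by
    rw [hc0]
    refine Eq.trans (NB_sum_eq (s := f.support)
      (F := fun i => f.coeff i * (g.coeff 0) ^ i)
      (i0 := 0) h0mem hF00 ?_) (by show NB p (f.coeff 0 * g.coeff 0 ^ 0) = (p:ℝ) ^ (-(r:ℝ)); rw [pow_zero, mul_one, hfv0])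
    intro i hi hine
    have hi1 : 1 ≤ i := Nat.one_le_iff_ne_zero.mpr hine
    rw [NB_mul, NB_pow, hgv0]
    have h1 : ((p:ℝ) ^ (-(r:ℝ))) ^ i = (p:ℝ) ^ (-(r:ℝ) * i) := by
      rw [← Real.rpow_natCast ((p:ℝ) ^ (-(r:ℝ))) i, ← Real.rpow_mul (le_of_lt hp0R)]
    rw [h1]
    have h2 : NB p (f.coeff i) * (p:ℝ) ^ (-(r:ℝ) * i) ≤
        (p:ℝ) ^ ((r:ℝ) / (f.natDegree : ℝ) * i - r) * (p:ℝ) ^ (-(r:ℝ) * i) :=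
      mul_le_mul_of_nonneg_right (hfb i) (le_of_lt (Real.rpow_pos_of_pos hp0R _))
    refine lt_of_le_of_lt h2 ?_
    rw [← Real.rpow_add hp0R]
    have h3 : NB p (f.coeff 0 * (g.coeff 0) ^ 0) = (p:ℝ) ^ (-(r:ℝ)) := by
      rw [pow_zero, mul_one, hfv0]
    rw [h3, Real.rpow_lt_rpow_left_iff hp1R]
    have hiR : (1:ℝ) ≤ (i:ℝ) := by exact_mod_cast hi1
    have hrR : (1:ℝ) ≤ (r:ℝ) := by exact_mod_cast hr
    have hfR : (2:ℝ) ≤ (f.natDegree : ℝ) := by exact_mod_cast hd2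
    have hfrac : (r:ℝ) / (f.natDegree : ℝ) * i < (r:ℝ) * i := by
      have : (r:ℝ) / (f.natDegree : ℝ) < (r:ℝ) := by
        rw [div_lt_iff₀ hdR]
        nlinarith
      have hipos : (0:ℝ) < (i:ℝ) := by linarith
      exact mul_lt_mul_of_pos_right this hipos
    nlinarith
  refine ⟨?_, ?_, hconstNB, ?_, ?_⟩
  · rw [hdc]
    exact Nat.one_le_iff_ne_zero.mpr (by positivity)
  · intro h0
    rw [h0, NB_zero] at hconstNB
    exact absurd hconstNB.symm (ne_of_gt (Real.rpow_pos_of_pos hp0R _))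
  · rw [Polynomial.leadingCoeff_comp (by omega), NB_mul, NB_pow, hflead, hglead]
    simp
  · intro j
    have := hbound j
    rw [hdc]
    push_cast
    exact this

lemma segN_of_isDumas {r : ℕ} {f : Polynomial ℚ} (hf : IsDumas p r f) : SegN p r f := by
  obtain ⟨hd, hcop, h0, hv0, hlead, hmid⟩ := hf
  have hfne : f ≠ 0 := fun h => h0 (by simp [h])
  refine ⟨hd, h0, ?_, ?_, ?_⟩
  · rw [NB_rpow h0, hv0]
    norm_num
  · rw [NB_rpow (Polynomial.leadingCoeff_ne_zero.mpr hfne), hlead]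
    simp
  · intro j
    by_cases hj : f.coeff j = 0
    · rw [hj, NB_zero]
      exact le_of_lt (Real.rpow_pos_of_pos hp0R _)
    · have hjd : j ≤ f.natDegree :=
        le_of_not_gt fun hlt => hj (Polynomial.coeff_eq_zero_of_natDegree_lt hlt)
      have hm := hmid j hjd hj
      rw [NB_rpow hj, Real.rpow_le_rpow_left_iff hp1R]
      have h2 : (r:ℝ) * (1 - (j:ℝ) / (f.natDegree:ℝ)) =
          (r:ℝ) - (r:ℝ) / (f.natDegree:ℝ) * j := by ring
      rw [h2] at hm
      linarith

lemma polyIter_natDegree (f : Polynomial ℚ) (n : ℕ) :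
    (polyIter f n).natDegree = f.natDegree ^ n := by
  induction n with
  | zero => simp [polyIter]
  | succ n ih =>
    show (f.comp (polyIter f n)).natDegree = _
    rw [Polynomial.natDegree_comp, ih, pow_succ, mul_comm]

lemma polyIter_segN {r : ℕ} {f : Polynomial ℚ} (hr : 1 ≤ r) (hf : IsDumas p r f)
    (hd2 : 2 ≤ f.natDegree) (n : ℕ) : SegN p r (polyIter f (n + 1)) := by
  induction n with
  | zero =>
    show SegN p r (f.comp (polyIter f 0))
    rw [show polyIter f 0 = Polynomial.X from rfl, Polynomial.comp_X]
    exact segN_of_isDumas hf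
  | succ n ih =>
    show SegN p r (f.comp (polyIter f (n + 1)))
    exact segN_comp hr (segN_of_isDumas hf) hd2 ih

end DumasAux

theorem dumas_dynamically_irreducible (p r : ℕ) (hp : p.Prime) (hr : 1 ≤ r)
    (f : Polynomial ℚ) (hf : IsDumas p r f) :
    ∀ n : ℕ, 1 ≤ n → Irreducible (polyIter f n) := by
  haveI : Fact p.Prime := ⟨hp⟩
  intro n hn
  obtain ⟨m, rfl⟩ : ∃ m, n = m + 1 := ⟨n - 1, by omega⟩
  have hd1 : 1 ≤ f.natDegree := hf.1
  rcases eq_or_lt_of_le hd1 with hd | hd2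
  · -- degree 1 case
    have hdeg : (polyIter f (m + 1)).natDegree = 1 := by
      rw [DumasAux.polyIter_natDegree, ← hd, one_pow]
    have hne : polyIter f (m + 1) ≠ 0 := fun h => by
      rw [h, Polynomial.natDegree_zero] at hdeg
      exact one_ne_zero hdeg.symm
    apply Polynomial.irreducible_of_degree_eq_one
    rw [Polynomial.degree_eq_natDegree hne, hdeg]
    rfl
  · have hseg := DumasAux.polyIter_segN hr hf hd2 m
    refine DumasAux.segN_irreducible hseg ?_
    rw [DumasAux.polyIter_natDegree]
    exact Nat.Coprime.pow_right _ hf.2.1
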